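/- Let J ⊆ K[x,y,z] be the Borel-fixed ideal (x^2, xy, y^2). The ideal I generated by f = x^2 + Axz + Byz + Cz^2, g = xy + Dxz + Eyz + Fz^2, h = y^2 + Gxz + Hyz + Iz^2 satisfies dim_K I_3 = 7 if and only if the 10 polynomial conditions hold: DF−CG−FH+EI = 0, DE−BG−F = 0, D^2−AG+EG−DH+I = 0, CD−AF+EF−BI = 0, BD−AE+E^2−BH+C = 0, CEG−BFG+EFH−E^2I−F^2 = 0, AF^2−EF^2−C^2G−CFH+CEI+BFI = 0, AEF−E^2F−BCG+BEI−CF = 0, AE^2−E^3−B^2G+BEH−CE−BF = 0, ACE−CE^2−ABF+BEF+BCH−B^2I−C^2 = 0. -/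

import Mathlib

namespace HilbAux

open MvPolynomial Finsupp Module Submodule
variable {K : Type*} [Field K]

/-- exponent vector for monomials in 3 variables -/
noncomputable def ex (a b c : ℕ) : Fin 3 →₀ ℕ :=
  Finsupp.single 0 a + Finsupp.single 1 b + Finsupp.single 2 c

lemma ex_apply (a b c : ℕ) : ex a b c 0 = a ∧ ex a b c 1 = b ∧ ex a b c 2 = c := by
  refine ⟨?_, ?_, ?_⟩ <;> simp [ex, Finsupp.single_apply]

lemma ex_eq_iff {a b c a' b' c' : ℕ} : ex a b c = ex a' b' c' ↔ a = a' ∧ b = b' ∧ c = c' := by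
  constructor
  · intro h
    have h0 := DFunLike.congr_fun h 0
    have h1 := DFunLike.congr_fun h 1
    have h2 := DFunLike.congr_fun h 2
    simp [ex, Finsupp.single_apply] at h0 h1 h2
    exact ⟨h0, h1, h2⟩
  · rintro ⟨rfl, rfl, rfl⟩; rfl

lemma degree_fin3 (d : Fin 3 →₀ ℕ) : d.degree = d 0 + d 1 + d 2 := by
  rw [Finsupp.degree_apply]
  rw [Finset.sum_subset (Finset.subset_univ _)
    (fun i _ hi => Finsupp.notMem_support_iff.mp hi)]
  simp [Fin.sum_univ_three]

lemma degree_ex (a b c : ℕ) : (ex a b c).degree = a + b + c := by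
  rw [degree_fin3]
  have h := ex_apply a b c
  rw [h.1, h.2.1, h.2.2]

lemma deg1_cases (d : Fin 3 →₀ ℕ) (hd : d.degree = 1) :
    d = Finsupp.single 0 1 ∨ d = Finsupp.single 1 1 ∨ d = Finsupp.single 2 1 := by
  rw [degree_fin3] at hd
  have h0 : d 0 = 1 ∧ d 1 = 0 ∧ d 2 = 0 ∨ d 0 = 0 ∧ d 1 = 1 ∧ d 2 = 0 ∨
      d 0 = 0 ∧ d 1 = 0 ∧ d 2 = 1 := by omega
  rcases h0 with ⟨h0, h1, h2⟩ | ⟨h0, h1, h2⟩ | ⟨h0, h1, h2⟩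
  · left; ext i; fin_cases i <;> simp [Finsupp.single_apply, h0, h1, h2]
  · right; left; ext i; fin_cases i <;> simp [Finsupp.single_apply, h0, h1, h2]
  · right; right; ext i; fin_cases i <;> simp [Finsupp.single_apply, h0, h1, h2]

lemma C_mul_X_pows (k : K) (a b c : ℕ) :
    monomial (ex a b c) k = C k * X 0 ^ a * X 1 ^ b * X 2 ^ c := by
  simp [X_pow_eq_monomial, monomial_mul, C_mul_monomial, ex, mul_assoc]

lemma degree_add' (u v : Fin 3 →₀ ℕ) : (u + v).degree = u.degree + v.degree := by
  classical
  simp [Finsupp.degree_eq_weight_one, map_add]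

lemma hc_mul (a f : MvPolynomial (Fin 3) K) (hf : f.IsHomogeneous 2) :
    homogeneousComponent 3 (a * f) = homogeneousComponent 1 a * f := by
  ext d
  rw [coeff_homogeneousComponent, coeff_mul, coeff_mul]
  by_cases hd : d.degree = 3
  · rw [if_pos hd]
    apply Finset.sum_congr rfl
    intro uv huv
    rw [Finset.HasAntidiagonal.mem_antidiagonal] at huv
    by_cases hv : coeff uv.2 f = 0
    · simp [hv]
    · have hdeg2 : uv.2.degree = 2 := by rw [Finsupp.degree_eq_weight_one]; exact hf hv
      have hdeg1 : uv.1.degree = 1 := by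
        have := degree_add' uv.1 uv.2
        rw [huv] at this
        omega
      rw [coeff_homogeneousComponent, if_pos hdeg1]
  · rw [if_neg hd]
    symm
    apply Finset.sum_eq_zero
    intro uv huv
    rw [Finset.HasAntidiagonal.mem_antidiagonal] at huv
    by_cases hv : coeff uv.2 f = 0
    · simp [hv]
    · have hdeg2 : uv.2.degree = 2 := by rw [Finsupp.degree_eq_weight_one]; exact hf hv
      have hdeg1 : uv.1.degree ≠ 1 := by
        have := degree_add' uv.1 uv.2
        rw [huv] at this
        omega
      rw [coeff_homogeneousComponent, if_neg hdeg1, zero_mul]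

noncomputable def Pf (a1 a2 a3 : K) : MvPolynomial (Fin 3) K :=
  X 0 ^ 2 + a1 • (X 0 * X 2) + a2 • (X 1 * X 2) + a3 • X 2 ^ 2
noncomputable def Pg (b1 b2 b3 : K) : MvPolynomial (Fin 3) K :=
  X 0 * X 1 + b1 • (X 0 * X 2) + b2 • (X 1 * X 2) + b3 • X 2 ^ 2
noncomputable def Ph (c1 c2 c3 : K) : MvPolynomial (Fin 3) K :=
  X 1 ^ 2 + c1 • (X 0 * X 2) + c2 • (X 1 * X 2) + c3 • X 2 ^ 2

variable (a1 a2 a3 b1 b2 b3 c1 c2 c3 : K)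

lemma xf_eq : X 0 * Pf a1 a2 a3 = monomial (ex 3 0 0) 1 + monomial (ex 2 0 1) a1
    + monomial (ex 1 1 1) a2 + monomial (ex 1 0 2) a3 := by
  simp only [C_mul_X_pows, Pf, smul_eq_C_mul, map_one]; ring

lemma yf_eq : X 1 * Pf a1 a2 a3 = monomial (ex 2 1 0) 1 + monomial (ex 1 1 1) a1
    + monomial (ex 0 2 1) a2 + monomial (ex 0 1 2) a3 := by
  simp only [C_mul_X_pows, Pf, smul_eq_C_mul, map_one]; ring

lemma zf_eq : X 2 * Pf a1 a2 a3 = monomial (ex 2 0 1) 1 + monomial (ex 1 0 2) a1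
    + monomial (ex 0 1 2) a2 + monomial (ex 0 0 3) a3 := by
  simp only [C_mul_X_pows, Pf, smul_eq_C_mul, map_one]; ring

lemma xg_eq : X 0 * Pg b1 b2 b3 = monomial (ex 2 1 0) 1 + monomial (ex 2 0 1) b1
    + monomial (ex 1 1 1) b2 + monomial (ex 1 0 2) b3 := by
  simp only [C_mul_X_pows, Pg, smul_eq_C_mul, map_one]; ring

lemma yg_eq : X 1 * Pg b1 b2 b3 = monomial (ex 1 2 0) 1 + monomial (ex 1 1 1) b1
    + monomial (ex 0 2 1) b2 + monomial (ex 0 1 2) b3 := by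
  simp only [C_mul_X_pows, Pg, smul_eq_C_mul, map_one]; ring

lemma zg_eq : X 2 * Pg b1 b2 b3 = monomial (ex 1 1 1) 1 + monomial (ex 1 0 2) b1
    + monomial (ex 0 1 2) b2 + monomial (ex 0 0 3) b3 := by
  simp only [C_mul_X_pows, Pg, smul_eq_C_mul, map_one]; ring

lemma xh_eq : X 0 * Ph c1 c2 c3 = monomial (ex 1 2 0) 1 + monomial (ex 2 0 1) c1
    + monomial (ex 1 1 1) c2 + monomial (ex 1 0 2) c3 := by
  simp only [C_mul_X_pows, Ph, smul_eq_C_mul, map_one]; ring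

lemma yh_eq : X 1 * Ph c1 c2 c3 = monomial (ex 0 3 0) 1 + monomial (ex 1 1 1) c1
    + monomial (ex 0 2 1) c2 + monomial (ex 0 1 2) c3 := by
  simp only [C_mul_X_pows, Ph, smul_eq_C_mul, map_one]; ring

lemma zh_eq : X 2 * Ph c1 c2 c3 = monomial (ex 0 2 1) 1 + monomial (ex 1 0 2) c1
    + monomial (ex 0 1 2) c2 + monomial (ex 0 0 3) c3 := by
  simp only [C_mul_X_pows, Ph, smul_eq_C_mul, map_one]; ring

lemma Pf_hom : (Pf a1 a2 a3).IsHomogeneous 2 := by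
  have h : Pf a1 a2 a3 = monomial (ex 2 0 0) 1 + monomial (ex 1 0 1) a1
      + monomial (ex 0 1 1) a2 + monomial (ex 0 0 2) a3 := by
    simp only [C_mul_X_pows, Pf, smul_eq_C_mul, map_one]; ring
  rw [h]
  refine IsHomogeneous.add (IsHomogeneous.add (IsHomogeneous.add ?_ ?_) ?_) ?_ <;>
    exact isHomogeneous_monomial _ (by rw [degree_ex])

lemma Pg_hom : (Pg b1 b2 b3).IsHomogeneous 2 := by
  have h : Pg b1 b2 b3 = monomial (ex 1 1 0) 1 + monomial (ex 1 0 1) b1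
      + monomial (ex 0 1 1) b2 + monomial (ex 0 0 2) b3 := by
    simp only [C_mul_X_pows, Pg, smul_eq_C_mul, map_one]; ring
  rw [h]
  refine IsHomogeneous.add (IsHomogeneous.add (IsHomogeneous.add ?_ ?_) ?_) ?_ <;>
    exact isHomogeneous_monomial _ (by rw [degree_ex])

lemma Ph_hom : (Ph c1 c2 c3).IsHomogeneous 2 := by
  have h : Ph c1 c2 c3 = monomial (ex 0 2 0) 1 + monomial (ex 1 0 1) c1
      + monomial (ex 0 1 1) c2 + monomial (ex 0 0 2) c3 := by
    simp only [C_mul_X_pows, Ph, smul_eq_C_mul, map_one]; ring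
  rw [h]
  refine IsHomogeneous.add (IsHomogeneous.add (IsHomogeneous.add ?_ ?_) ?_) ?_ <;>
    exact isHomogeneous_monomial _ (by rw [degree_ex])

/-- The set of nine generators of the degree-3 piece. -/
def S9 : Set (MvPolynomial (Fin 3) K) :=
  {X 0 * Pf a1 a2 a3, X 1 * Pf a1 a2 a3, X 2 * Pf a1 a2 a3,
   X 0 * Pg b1 b2 b3, X 1 * Pg b1 b2 b3, X 2 * Pg b1 b2 b3,
   X 0 * Ph c1 c2 c3, X 1 * Ph c1 c2 c3, X 2 * Ph c1 c2 c3}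

lemma memS9 : X 0 * Pf a1 a2 a3 ∈ S9 a1 a2 a3 b1 b2 b3 c1 c2 c3
    ∧ X 1 * Pf a1 a2 a3 ∈ S9 a1 a2 a3 b1 b2 b3 c1 c2 c3
    ∧ X 2 * Pf a1 a2 a3 ∈ S9 a1 a2 a3 b1 b2 b3 c1 c2 c3
    ∧ X 0 * Pg b1 b2 b3 ∈ S9 a1 a2 a3 b1 b2 b3 c1 c2 c3
    ∧ X 1 * Pg b1 b2 b3 ∈ S9 a1 a2 a3 b1 b2 b3 c1 c2 c3
    ∧ X 2 * Pg b1 b2 b3 ∈ S9 a1 a2 a3 b1 b2 b3 c1 c2 c3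
    ∧ X 0 * Ph c1 c2 c3 ∈ S9 a1 a2 a3 b1 b2 b3 c1 c2 c3
    ∧ X 1 * Ph c1 c2 c3 ∈ S9 a1 a2 a3 b1 b2 b3 c1 c2 c3
    ∧ X 2 * Ph c1 c2 c3 ∈ S9 a1 a2 a3 b1 b2 b3 c1 c2 c3 := by
  unfold S9
  refine ⟨Set.mem_insert _ _, ?_, ?_, ?_, ?_, ?_, ?_, ?_, ?_⟩ <;>
    · repeat first
        | with_reducible exact Set.mem_insert _ _
        | with_reducible exact Set.mem_singleton _
        | apply Set.mem_insert_of_mem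

/-- The span of the degree-3 graded piece of the ideal. -/
theorem span9 :
    Submodule.restrictScalars K
        (Ideal.span {Pf a1 a2 a3, Pg b1 b2 b3, Ph c1 c2 c3}) ⊓
      homogeneousSubmodule (Fin 3) K 3
    = Submodule.span K (S9 a1 a2 a3 b1 b2 b3 c1 c2 c3) := by
  apply le_antisymm
  · rintro p ⟨hpI, hp3⟩
    have hpI' : p ∈ Ideal.span {Pf a1 a2 a3, Pg b1 b2 b3, Ph c1 c2 c3} := hpI
    clear hpI
    rw [Ideal.mem_span_insert] at hpI'
    rename' hpI' => hpI
    obtain ⟨a, z, hz, rfl⟩ := hpI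
    rw [Ideal.mem_span_pair] at hz
    obtain ⟨u, v, rfl⟩ := hz
    have hp3' : homogeneousComponent 3 (a * Pf a1 a2 a3 + (u * Pg b1 b2 b3 + v * Ph c1 c2 c3))
        = a * Pf a1 a2 a3 + (u * Pg b1 b2 b3 + v * Ph c1 c2 c3) := by
      rw [homogeneousComponent_of_mem hp3, if_pos rfl]
    rw [← hp3', map_add, map_add, hc_mul _ _ (Pf_hom a1 a2 a3),
      hc_mul _ _ (Pg_hom b1 b2 b3), hc_mul _ _ (Ph_hom c1 c2 c3)]
    have key : ∀ (q w : MvPolynomial (Fin 3) K), q.IsHomogeneous 1 →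
        (X 0 * w) ∈ S9 a1 a2 a3 b1 b2 b3 c1 c2 c3 →
        (X 1 * w) ∈ S9 a1 a2 a3 b1 b2 b3 c1 c2 c3 →
        (X 2 * w) ∈ S9 a1 a2 a3 b1 b2 b3 c1 c2 c3 →
        q * w ∈ Submodule.span K (S9 a1 a2 a3 b1 b2 b3 c1 c2 c3) := by
      intro q w hq h0 h1 h2
      rw [q.as_sum, Finset.sum_mul]
      apply Submodule.sum_mem
      intro d hd
      have hdeg : d.degree = 1 := by
        rw [Finsupp.degree_eq_weight_one]
        exact hq (MvPolynomial.mem_support_iff.mp hd)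
      have hmono : ∀ i : Fin 3, monomial (Finsupp.single i 1) (coeff d q) * w
          = (coeff d q) • (X i * w) := by
        intro i
        rw [smul_eq_C_mul, ← mul_assoc]
        congr 1
        rw [← C_mul_X_pow_eq_monomial, pow_one]
      rcases deg1_cases d hdeg with rfl | rfl | rfl
      · rw [hmono 0]; exact Submodule.smul_mem _ _ (Submodule.subset_span h0)
      · rw [hmono 1]; exact Submodule.smul_mem _ _ (Submodule.subset_span h1)
      · rw [hmono 2]; exact Submodule.smul_mem _ _ (Submodule.subset_span h2)
    obtain ⟨m1, m2, m3, m4, m5, m6, m7, m8, m9⟩ := memS9 a1 a2 a3 b1 b2 b3 c1 c2 c3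
    refine Submodule.add_mem _ ?_ (Submodule.add_mem _ ?_ ?_)
    · exact key _ _ (homogeneousComponent_isHomogeneous 1 a) m1 m2 m3
    · exact key _ _ (homogeneousComponent_isHomogeneous 1 u) m4 m5 m6
    · exact key _ _ (homogeneousComponent_isHomogeneous 1 v) m7 m8 m9
  · rw [Submodule.span_le]
    have hmem : ∀ (i : Fin 3) (w : MvPolynomial (Fin 3) K),
        w ∈ ({Pf a1 a2 a3, Pg b1 b2 b3, Ph c1 c2 c3} : Set (MvPolynomial (Fin 3) K)) →
        w.IsHomogeneous 2 →
        X i * w ∈ (Submodule.restrictScalars K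
          (Ideal.span {Pf a1 a2 a3, Pg b1 b2 b3, Ph c1 c2 c3}) ⊓
            homogeneousSubmodule (Fin 3) K 3 : Submodule K (MvPolynomial (Fin 3) K)) := by
      intro i w hw hw2
      constructor
      · show X i * w ∈ Ideal.span {Pf a1 a2 a3, Pg b1 b2 b3, Ph c1 c2 c3}
        exact Ideal.mul_mem_left _ _ (Ideal.subset_span hw)
      · exact (isHomogeneous_X K i).mul hw2
    rintro p (rfl | rfl | rfl | rfl | rfl | rfl | rfl | rfl | rfl)
    · exact hmem 0 _ (by simp) (Pf_hom a1 a2 a3)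
    · exact hmem 1 _ (by simp) (Pf_hom a1 a2 a3)
    · exact hmem 2 _ (by simp) (Pf_hom a1 a2 a3)
    · exact hmem 0 _ (by simp) (Pg_hom b1 b2 b3)
    · exact hmem 1 _ (by simp) (Pg_hom b1 b2 b3)
    · exact hmem 2 _ (by simp) (Pg_hom b1 b2 b3)
    · exact hmem 0 _ (by simp) (Ph_hom c1 c2 c3)
    · exact hmem 1 _ (by simp) (Ph_hom c1 c2 c3)
    · exact hmem 2 _ (by simp) (Ph_hom c1 c2 c3)


section VecHelpers
variable {α : Type*} (a b c d e f g : α)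
lemma vec7_0 : ![a,b,c,d,e,f,g] (0 : Fin 7) = a := rfl
lemma vec7_1 : ![a,b,c,d,e,f,g] (1 : Fin 7) = b := rfl
lemma vec7_2 : ![a,b,c,d,e,f,g] (2 : Fin 7) = c := rfl
lemma vec7_3 : ![a,b,c,d,e,f,g] (3 : Fin 7) = d := rfl
lemma vec7_4 : ![a,b,c,d,e,f,g] (4 : Fin 7) = e := rfl
lemma vec7_5 : ![a,b,c,d,e,f,g] (5 : Fin 7) = f := rfl
lemma vec7_6 : ![a,b,c,d,e,f,g] (6 : Fin 7) = g := rfl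
lemma vec7_0' : ![a,b,c,d,e,f,g] (⟨0, by omega⟩ : Fin 7) = a := rfl
lemma vec7_1' : ![a,b,c,d,e,f,g] (⟨1, by omega⟩ : Fin 7) = b := rfl
lemma vec7_2' : ![a,b,c,d,e,f,g] (⟨2, by omega⟩ : Fin 7) = c := rfl
lemma vec7_3' : ![a,b,c,d,e,f,g] (⟨3, by omega⟩ : Fin 7) = d := rfl
lemma vec7_4' : ![a,b,c,d,e,f,g] (⟨4, by omega⟩ : Fin 7) = e := rfl
lemma vec7_5' : ![a,b,c,d,e,f,g] (⟨5, by omega⟩ : Fin 7) = f := rfl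
lemma vec7_6' : ![a,b,c,d,e,f,g] (⟨6, by omega⟩ : Fin 7) = g := rfl
end VecHelpers

noncomputable def v7 : Fin 7 → MvPolynomial (Fin 3) K :=
  ![X 0 * Pf a1 a2 a3, X 1 * Pf a1 a2 a3, X 1 * Pg b1 b2 b3, X 1 * Ph c1 c2 c3,
    X 2 * Pf a1 a2 a3, X 2 * Pg b1 b2 b3, X 2 * Ph c1 c2 c3]

noncomputable def piv : Fin 7 → (Fin 3 →₀ ℕ) :=
  ![ex 3 0 0, ex 2 1 0, ex 1 2 0, ex 0 3 0, ex 2 0 1, ex 1 1 1, ex 0 2 1]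

noncomputable def Psi : MvPolynomial (Fin 3) K →ₗ[K] (Fin 7 → K) :=
  LinearMap.pi (fun j => lcoeff K (piv j))

lemma Psi_apply (p : MvPolynomial (Fin 3) K) (j : Fin 7) : Psi p j = coeff (piv j) p := rfl

def Mmat : Matrix (Fin 7) (Fin 7) K := Matrix.of
  ![![1,0,0,0,a1,a2,0],![0,1,0,0,0,a1,a2],![0,0,1,0,0,b1,b2],
    ![0,0,0,1,0,c1,c2],![0,0,0,0,1,0,0],![0,0,0,0,0,1,0],![0,0,0,0,0,0,1]]

lemma Mmat_unit : IsUnit (Mmat a1 a2 b1 b2 c1 c2) := by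
  rw [Matrix.isUnit_iff_isUnit_det]
  have htri : (Mmat a1 a2 b1 b2 c1 c2).BlockTriangular id := by
    intro i j hij
    fin_cases i <;> fin_cases j <;> first | rfl | exact absurd hij (by decide)
  rw [Matrix.det_of_upperTriangular htri]
  have hdiag : ∀ i : Fin 7, Mmat a1 a2 b1 b2 c1 c2 i i = 1 := by
    intro i; fin_cases i <;> rfl
  simp [hdiag]

lemma Psi_v7 : ⇑Psi ∘ v7 a1 a2 a3 b1 b2 b3 c1 c2 c3
    = fun i => Mmat a1 a2 b1 b2 c1 c2 i := by
  funext i j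
  fin_cases i <;> fin_cases j <;>
    simp only [Function.comp_apply, Psi_apply, piv, v7, Mmat, Matrix.of_apply,
      vec7_0, vec7_1, vec7_2, vec7_3, vec7_4, vec7_5, vec7_6,
      vec7_0', vec7_1', vec7_2', vec7_3', vec7_4', vec7_5', vec7_6',
      xf_eq, yf_eq, yg_eq, yh_eq, zf_eq, zg_eq, zh_eq] <;>
    simp [coeff_monomial, ex_eq_iff]

lemma li_v7 : LinearIndependent K (v7 a1 a2 a3 b1 b2 b3 c1 c2 c3) := by
  apply LinearIndependent.of_comp Psi
  rw [Psi_v7]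
  exact Matrix.linearIndependent_rows_iff_isUnit.mpr (Mmat_unit a1 a2 b1 b2 c1 c2)

lemma finrank_T : finrank K (span K (Set.range (v7 a1 a2 a3 b1 b2 b3 c1 c2 c3))) = 7 := by
  rw [finrank_span_eq_card (li_v7 a1 a2 a3 b1 b2 b3 c1 c2 c3)]
  simp

lemma psi_inj_on_T {p : MvPolynomial (Fin 3) K}
    (hp : p ∈ span K (Set.range (v7 a1 a2 a3 b1 b2 b3 c1 c2 c3))) (h0 : Psi p = 0) :
    p = 0 := by
  set T := span K (Set.range (v7 a1 a2 a3 b1 b2 b3 c1 c2 c3)) with hT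
  haveI : FiniteDimensional K T := FiniteDimensional.span_of_finite K (Set.finite_range _)
  set φ : T →ₗ[K] (Fin 7 → K) := Psi.comp T.subtype with hφ
  have hsurj : Function.Surjective φ := by
    rw [← LinearMap.range_eq_top, hφ, LinearMap.range_comp, Submodule.range_subtype]
    show Submodule.map Psi T = ⊤
    rw [hT, Submodule.map_span, ← Set.range_comp, Psi_v7]
    apply LinearIndependent.span_eq_top_of_card_eq_finrank
    · exact Matrix.linearIndependent_rows_iff_isUnit.mpr (Mmat_unit a1 a2 b1 b2 c1 c2)
    · simp
  have hinj : Function.Injective φ := by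
    rw [LinearMap.injective_iff_surjective_of_finrank_eq_finrank
      (by rw [hT, finrank_T]; simp)]
    exact hsurj
  have hval : φ ⟨p, hp⟩ = φ 0 := by
    have h1 : φ ⟨p, hp⟩ = Psi p := rfl
    simp [h1, h0]
  have := hinj hval
  simpa using congrArg Subtype.val this
noncomputable def w1 : MvPolynomial (Fin 3) K :=
  monomial (ex 1 0 2) (a2*c1 + b3 - b1*b2)
    + monomial (ex 0 1 2) (a1*b2 + a2*c2 - a2*b1 - b2^2 - a3)
    + monomial (ex 0 0 3) (a1*b3 + a2*c3 - a3*b1 - b2*b3)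

noncomputable def w2 : MvPolynomial (Fin 3) K :=
  monomial (ex 1 0 2) (b1^2 + b2*c1 + c3 - a1*c1 - b1*c2)
    + monomial (ex 0 1 2) (b1*b2 - a2*c1 - b3)
    + monomial (ex 0 0 3) (b1*b3 + b2*c3 - a3*c1 - b3*c2)

lemma idw1 : X 0 * Pg b1 b2 b3 = X 1 * Pf a1 a2 a3 + b1 • (X 2 * Pf a1 a2 a3)
    + (b2 - a1) • (X 2 * Pg b1 b2 b3) - a2 • (X 2 * Ph c1 c2 c3)
    + w1 a1 a2 a3 b1 b2 b3 c1 c2 c3 := by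
  simp only [w1, Pf, Pg, Ph, smul_eq_C_mul, C_mul_X_pows, map_add, map_sub, map_mul,
    map_pow, map_one]
  ring

lemma idw2 : X 0 * Ph c1 c2 c3 = X 1 * Pg b1 b2 b3 + c1 • (X 2 * Pf a1 a2 a3)
    + (c2 - b1) • (X 2 * Pg b1 b2 b3) - b2 • (X 2 * Ph c1 c2 c3)
    + w2 a1 a2 a3 b1 b2 b3 c1 c2 c3 := by
  simp only [w2, Pf, Pg, Ph, smul_eq_C_mul, C_mul_X_pows, map_add, map_sub, map_mul,
    map_pow, map_one]
  ring

lemma span_S9_eq : span K (S9 a1 a2 a3 b1 b2 b3 c1 c2 c3)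
    = span K (Set.range (v7 a1 a2 a3 b1 b2 b3 c1 c2 c3))
      ⊔ span K {w1 a1 a2 a3 b1 b2 b3 c1 c2 c3, w2 a1 a2 a3 b1 b2 b3 c1 c2 c3} := by
  have hyf : X 1 * Pf a1 a2 a3 ∈ span K (Set.range (v7 a1 a2 a3 b1 b2 b3 c1 c2 c3)) :=
    subset_span ⟨1, rfl⟩
  have hzf : X 2 * Pf a1 a2 a3 ∈ span K (Set.range (v7 a1 a2 a3 b1 b2 b3 c1 c2 c3)) :=
    subset_span ⟨4, rfl⟩
  have hyg : X 1 * Pg b1 b2 b3 ∈ span K (Set.range (v7 a1 a2 a3 b1 b2 b3 c1 c2 c3)) :=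
    subset_span ⟨2, rfl⟩
  have hzg : X 2 * Pg b1 b2 b3 ∈ span K (Set.range (v7 a1 a2 a3 b1 b2 b3 c1 c2 c3)) :=
    subset_span ⟨5, rfl⟩
  have hzh : X 2 * Ph c1 c2 c3 ∈ span K (Set.range (v7 a1 a2 a3 b1 b2 b3 c1 c2 c3)) :=
    subset_span ⟨6, rfl⟩
  apply le_antisymm
  · rw [Submodule.span_le]
    intro p hp
    simp only [S9, Set.mem_insert_iff, Set.mem_singleton_iff] at hp
    rcases hp with rfl | rfl | rfl | rfl | rfl | rfl | rfl | rfl | rfl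
    · exact Submodule.mem_sup_left (subset_span ⟨0, rfl⟩)
    · exact Submodule.mem_sup_left hyf
    · exact Submodule.mem_sup_left hzf
    · rw [idw1 a1 a2 a3 b1 b2 b3 c1 c2 c3]
      refine Submodule.add_mem _ (Submodule.sub_mem _ (Submodule.add_mem _
        (Submodule.add_mem _ (Submodule.mem_sup_left hyf)
          (Submodule.smul_mem _ _ (Submodule.mem_sup_left hzf)))
        (Submodule.smul_mem _ _ (Submodule.mem_sup_left hzg)))
        (Submodule.smul_mem _ _ (Submodule.mem_sup_left hzh))) ?_
      exact Submodule.mem_sup_right (subset_span (Set.mem_insert _ _))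
    · exact Submodule.mem_sup_left hyg
    · exact Submodule.mem_sup_left hzg
    · rw [idw2 a1 a2 a3 b1 b2 b3 c1 c2 c3]
      refine Submodule.add_mem _ (Submodule.sub_mem _ (Submodule.add_mem _
        (Submodule.add_mem _ (Submodule.mem_sup_left hyg)
          (Submodule.smul_mem _ _ (Submodule.mem_sup_left hzf)))
        (Submodule.smul_mem _ _ (Submodule.mem_sup_left hzg)))
        (Submodule.smul_mem _ _ (Submodule.mem_sup_left hzh))) ?_
      exact Submodule.mem_sup_right (subset_span (Set.mem_insert_of_mem _ rfl))
    · exact Submodule.mem_sup_left (subset_span ⟨3, rfl⟩)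
    · exact Submodule.mem_sup_left hzh
  · obtain ⟨m1, m2, m3, m4, m5, m6, m7, m8, m9⟩ := memS9 a1 a2 a3 b1 b2 b3 c1 c2 c3
    apply sup_le <;> rw [Submodule.span_le]
    · rintro p ⟨i, rfl⟩
      apply subset_span
      fin_cases i
      exacts [m1, m2, m5, m8, m3, m6, m9]
    · have hw1 : w1 a1 a2 a3 b1 b2 b3 c1 c2 c3 = X 0 * Pg b1 b2 b3
          - (X 1 * Pf a1 a2 a3 + b1 • (X 2 * Pf a1 a2 a3)
            + (b2 - a1) • (X 2 * Pg b1 b2 b3) - a2 • (X 2 * Ph c1 c2 c3)) := by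
        rw [idw1 a1 a2 a3 b1 b2 b3 c1 c2 c3]; abel
      have hw2 : w2 a1 a2 a3 b1 b2 b3 c1 c2 c3 = X 0 * Ph c1 c2 c3
          - (X 1 * Pg b1 b2 b3 + c1 • (X 2 * Pf a1 a2 a3)
            + (c2 - b1) • (X 2 * Pg b1 b2 b3) - b2 • (X 2 * Ph c1 c2 c3)) := by
        rw [idw2 a1 a2 a3 b1 b2 b3 c1 c2 c3]; abel
      rintro p (rfl | rfl)
      · rw [hw1]
        exact Submodule.sub_mem _ (subset_span m4) (Submodule.sub_mem _
          (Submodule.add_mem _ (Submodule.add_mem _ (subset_span m2)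
            (Submodule.smul_mem _ _ (subset_span m3)))
            (Submodule.smul_mem _ _ (subset_span m6)))
          (Submodule.smul_mem _ _ (subset_span m9)))
      · rw [hw2]
        exact Submodule.sub_mem _ (subset_span m7) (Submodule.sub_mem _
          (Submodule.add_mem _ (Submodule.add_mem _ (subset_span m5)
            (Submodule.smul_mem _ _ (subset_span m3)))
            (Submodule.smul_mem _ _ (subset_span m6)))
          (Submodule.smul_mem _ _ (subset_span m9)))

lemma Psi_w1 : Psi (w1 a1 a2 a3 b1 b2 b3 c1 c2 c3) = 0 := by
  funext j
  fin_cases j <;>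
    simp only [Psi_apply, piv, w1, Pi.zero_apply,
      vec7_0, vec7_1, vec7_2, vec7_3, vec7_4, vec7_5, vec7_6,
      vec7_0', vec7_1', vec7_2', vec7_3', vec7_4', vec7_5', vec7_6'] <;>
    simp [coeff_monomial, ex_eq_iff]

lemma Psi_w2 : Psi (w2 a1 a2 a3 b1 b2 b3 c1 c2 c3) = 0 := by
  funext j
  fin_cases j <;>
    simp only [Psi_apply, piv, w2, Pi.zero_apply,
      vec7_0, vec7_1, vec7_2, vec7_3, vec7_4, vec7_5, vec7_6,
      vec7_0', vec7_1', vec7_2', vec7_3', vec7_4', vec7_5', vec7_6'] <;>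
    simp [coeff_monomial, ex_eq_iff]

lemma S9_finite : (S9 a1 a2 a3 b1 b2 b3 c1 c2 c3 : Set (MvPolynomial (Fin 3) K)).Finite := by
  unfold S9
  repeat apply Set.Finite.insert
  exact Set.finite_singleton _

lemma dim7_iff : finrank K (span K (S9 a1 a2 a3 b1 b2 b3 c1 c2 c3)) = 7 ↔
    w1 a1 a2 a3 b1 b2 b3 c1 c2 c3 = 0 ∧ w2 a1 a2 a3 b1 b2 b3 c1 c2 c3 = 0 := by
  constructor
  · intro hd
    haveI : FiniteDimensional K (span K (S9 a1 a2 a3 b1 b2 b3 c1 c2 c3)) :=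
      FiniteDimensional.span_of_finite K (S9_finite a1 a2 a3 b1 b2 b3 c1 c2 c3)
    have hle : span K (Set.range (v7 a1 a2 a3 b1 b2 b3 c1 c2 c3))
        ≤ span K (S9 a1 a2 a3 b1 b2 b3 c1 c2 c3) := by
      rw [span_S9_eq]; exact le_sup_left
    have heq := Submodule.eq_of_le_of_finrank_le hle
      (by rw [hd, finrank_T a1 a2 a3 b1 b2 b3 c1 c2 c3])
    have hw1m : w1 a1 a2 a3 b1 b2 b3 c1 c2 c3 ∈ span K (S9 a1 a2 a3 b1 b2 b3 c1 c2 c3) := by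
      rw [span_S9_eq]
      exact Submodule.mem_sup_right (subset_span (Set.mem_insert _ _))
    have hw2m : w2 a1 a2 a3 b1 b2 b3 c1 c2 c3 ∈ span K (S9 a1 a2 a3 b1 b2 b3 c1 c2 c3) := by
      rw [span_S9_eq]
      exact Submodule.mem_sup_right (subset_span (Set.mem_insert_of_mem _ rfl))
    rw [← heq] at hw1m hw2m
    exact ⟨psi_inj_on_T a1 a2 a3 b1 b2 b3 c1 c2 c3 hw1m (Psi_w1 a1 a2 a3 b1 b2 b3 c1 c2 c3),
      psi_inj_on_T a1 a2 a3 b1 b2 b3 c1 c2 c3 hw2m (Psi_w2 a1 a2 a3 b1 b2 b3 c1 c2 c3)⟩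
  · rintro ⟨h1, h2⟩
    rw [span_S9_eq, h1, h2]
    have hz : ({(0 : MvPolynomial (Fin 3) K), 0} : Set (MvPolynomial (Fin 3) K)) = {0} := by
      simp
    rw [hz, Submodule.span_zero_singleton, sup_bot_eq]
    exact finrank_T a1 a2 a3 b1 b2 b3 c1 c2 c3

lemma w1_zero_iff : w1 a1 a2 a3 b1 b2 b3 c1 c2 c3 = 0 ↔
    (b1*b2 - a2*c1 - b3 = 0 ∧ a2*b1 - a1*b2 + b2^2 - a2*c2 + a3 = 0
      ∧ a3*b1 - a1*b3 + b2*b3 - a2*c3 = 0) := by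
  constructor
  · intro hw
    have h1 := congrArg (coeff (ex 1 0 2)) hw
    have h2 := congrArg (coeff (ex 0 1 2)) hw
    have h3 := congrArg (coeff (ex 0 0 3)) hw
    simp [w1, coeff_monomial, ex_eq_iff] at h1 h2 h3
    refine ⟨by linear_combination -h1, by linear_combination -h2, by linear_combination -h3⟩
  · rintro ⟨h1, h2, h3⟩
    rw [w1]
    rw [show a2*c1 + b3 - b1*b2 = 0 by linear_combination -h1,
      show a1*b2 + a2*c2 - a2*b1 - b2^2 - a3 = 0 by linear_combination -h2,
      show a1*b3 + a2*c3 - a3*b1 - b2*b3 = 0 by linear_combination -h3]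
    simp

lemma w2_zero_iff : w2 a1 a2 a3 b1 b2 b3 c1 c2 c3 = 0 ↔
    (b1^2 - a1*c1 + b2*c1 - b1*c2 + c3 = 0 ∧ b1*b2 - a2*c1 - b3 = 0
      ∧ b1*b3 - a3*c1 - b3*c2 + b2*c3 = 0) := by
  constructor
  · intro hw
    have h1 := congrArg (coeff (ex 1 0 2)) hw
    have h2 := congrArg (coeff (ex 0 1 2)) hw
    have h3 := congrArg (coeff (ex 0 0 3)) hw
    simp [w2, coeff_monomial, ex_eq_iff] at h1 h2 h3
    refine ⟨by linear_combination h1, by linear_combination h2, by linear_combination h3⟩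
  · rintro ⟨h1, h2, h3⟩
    rw [w2]
    rw [show b1^2 + b2*c1 + c3 - a1*c1 - b1*c2 = 0 by linear_combination h1,
      show b1*b2 - a2*c1 - b3 = 0 by linear_combination h2,
      show b1*b3 + b2*c3 - a3*c1 - b3*c2 = 0 by linear_combination h3]
    simp
end HilbAux


open MvPolynomial

/-- The dimension over `K` of the degree-`d` graded piece of an ideal in
`K[x,y,z]`. -/
noncomputable def hilb {K : Type*} [Field K]
    (I : Ideal (MvPolynomial (Fin 3) K)) (d : ℕ) : ℕ :=
  Module.finrank K
    ↥(Submodule.restrictScalars K I ⊓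
        MvPolynomial.homogeneousSubmodule (Fin 3) K d)

/-- For `f = x² + Axz + Byz + Cz²`, `g = xy + Dxz + Eyz + Fz²`,
`h = y² + Gxz + Hyz + Iz²` in `K[x,y,z]`, the ideal `(f,g,h)` has degree-3 graded
piece of dimension 7 if and only if the ten listed polynomial equations in
`A,…,I` hold. -/
theorem hilbert_scheme_three_points_chart {K : Type*} [Field K] [CharZero K]
    [IsAlgClosed K] (A B C D E F G H I : K)
    (x y z : MvPolynomial (Fin 3) K) (hx : x = X 0) (hy : y = X 1) (hz : z = X 2)
    (f g h : MvPolynomial (Fin 3) K)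
    (hf : f = x ^ 2 + A • (x * z) + B • (y * z) + C • z ^ 2)
    (hg : g = x * y + D • (x * z) + E • (y * z) + F • z ^ 2)
    (hh : h = y ^ 2 + G • (x * z) + H • (y * z) + I • z ^ 2)
    (Idl : Ideal (MvPolynomial (Fin 3) K)) (hIdl : Idl = Ideal.span {f, g, h}) :
    hilb Idl 3 = 7 ↔
      (D * F - C * G - F * H + E * I = 0 ∧
       D * E - B * G - F = 0 ∧
       D ^ 2 - A * G + E * G - D * H + I = 0 ∧
       C * D - A * F + E * F - B * I = 0 ∧
       B * D - A * E + E ^ 2 - B * H + C = 0 ∧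
       C * E * G - B * F * G + E * F * H - E ^ 2 * I - F ^ 2 = 0 ∧
       A * F ^ 2 - E * F ^ 2 - C ^ 2 * G - C * F * H + C * E * I + B * F * I = 0 ∧
       A * E * F - E ^ 2 * F - B * C * G + B * E * I - C * F = 0 ∧
       A * E ^ 2 - E ^ 3 - B ^ 2 * G + B * E * H - C * E - B * F = 0 ∧
       A * C * E - C * E ^ 2 - A * B * F + B * E * F + B * C * H - B ^ 2 * I - C ^ 2 = 0) := by
  subst hx hy hz hf hg hh hIdl
  unfold hilb
  rw [show (X 0 ^ 2 + A • (X 0 * X 2) + B • (X 1 * X 2) + C • X 2 ^ 2 :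
      MvPolynomial (Fin 3) K) = HilbAux.Pf A B C from rfl,
    show (X 0 * X 1 + D • (X 0 * X 2) + E • (X 1 * X 2) + F • X 2 ^ 2 :
      MvPolynomial (Fin 3) K) = HilbAux.Pg D E F from rfl,
    show (X 1 ^ 2 + G • (X 0 * X 2) + H • (X 1 * X 2) + I • X 2 ^ 2 :
      MvPolynomial (Fin 3) K) = HilbAux.Ph G H I from rfl,
    HilbAux.span9 A B C D E F G H I, HilbAux.dim7_iff A B C D E F G H I,
    HilbAux.w1_zero_iff A B C D E F G H I, HilbAux.w2_zero_iff A B C D E F G H I]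
  constructor
  · rintro ⟨⟨h2, h5, h4⟩, ⟨h3, -, h1⟩⟩
    refine ⟨h1, h2, h3, h4, h5, ?_, ?_, ?_, ?_, ?_⟩
    · linear_combination (-E) * h1 + F * h2
    · linear_combination C * h1 - F * h4
    · linear_combination C * h2 - E * h4
    · linear_combination B * h2 - E * h5
    · linear_combination B * h4 - C * h5
  · rintro ⟨h1, h2, h3, h4, h5, -, -, -, -, -⟩
    exact ⟨⟨h2, h5, h4⟩, ⟨h3, h2, h1⟩⟩
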